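/- Let B be the set of all 2^7 even-weight words of F_2^8 and let C ⊆ B be an (8,16,4)-code all of whose words have even weight. Then for the set L = {(x, y, y+z) : x, y ∈ B, z ∈ C} ⊆ F_2^24 (concatenation of three length-8 blocks, addition in F_2^8), which consists of even-weight words, the characteristic function χ_L is a perfect 2-coloring of the even-weight component of HH(24) with parameters ((28, 248)(8, 268)). -/

import Mathlib

/-- Binary words of length `n`. -/
abbrev Word (n : ℕ) := Fin n → ZMod 2

/-- The even-weight words of `F_2^n`. -/
def evenWords (n : ℕ) : Set (Word n) := {v | Even (hammingDist v 0)}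

/-- `χ_C` is a perfect 2-coloring with parameters `((a,b)(c,d))` of the graph with vertex set
`V ⊆ F_2^n` in which two words are adjacent iff their Hamming distance is exactly 2:
`C ⊆ V`, both colors occur, every vertex of `C` has exactly `a` neighbors in `C` and
`b` neighbors outside `C`, and every vertex of `V \ C` has exactly `c` neighbors in `C` and
`d` neighbors outside `C`. -/
def IsPerfect2Coloring {n : ℕ} (V C : Set (Word n)) (a b c d : ℕ) : Prop :=
  C ⊆ V ∧ C.Nonempty ∧ (V \ C).Nonempty ∧
  (∀ v ∈ C,
    {w | w ∈ V ∧ hammingDist v w = 2 ∧ w ∈ C}.ncard = a ∧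
    {w | w ∈ V ∧ hammingDist v w = 2 ∧ w ∉ C}.ncard = b) ∧
  (∀ v ∈ V \ C,
    {w | w ∈ V ∧ hammingDist v w = 2 ∧ w ∈ C}.ncard = c ∧
    {w | w ∈ V ∧ hammingDist v w = 2 ∧ w ∉ C}.ncard = d)

/-- Concatenation of three length-8 blocks into a word of length 24. -/
def cat3 (u v w : Word 8) : Word 24 := Fin.append (Fin.append u v) w

/-- An `(n,M,d)`-code: a set of `M` binary words of length `n` whose pairwise Hamming
distances are all at least `d`. -/
def IsCode (n M d : ℕ) (C : Set (Word n)) : Prop :=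
  C.ncard = M ∧ ∀ u ∈ C, ∀ v ∈ C, u ≠ v → d ≤ hammingDist u v

/-! ### basic tools -/

namespace PCol

variable {n : ℕ}

/-- parity of a word -/
def σp (u : Word n) : ZMod 2 := ∑ i, u i

lemma zmod2_cases (a : ZMod 2) : a = 0 ∨ a = 1 := by revert a; decide

lemma word_sub_eq_add (x y : Word n) : x - y = x + y := by
  funext i; exact CharTwo.sub_eq_add _ _

lemma dist_eq_norm_add (x y : Word n) : hammingDist x y = hammingNorm (x + y) := by
  rw [hammingDist_eq_hammingNorm]
  congr 1; funext i; simp [ZMod.neg_eq_self_mod_two]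

lemma add_add_cancel (x y : Word n) : x + (x + y) = y := by
  funext i; simp [← add_assoc]; exact CharTwo.add_self_eq_zero _

open scoped symmDiff

lemma σp_add (u v : Word n) : σp (u + v) = σp u + σp v := by
  simp only [σp, Pi.add_apply, Finset.sum_add_distrib]

lemma norm_cast_eq_σp (u : Word n) : ((hammingNorm u : ZMod 2)) = σp u := by
  have h1 : hammingNorm u = ∑ i ∈ Finset.univ.filter (fun i => u i ≠ 0), 1 :=
    Finset.card_eq_sum_ones _
  have h2 : σp u = ∑ i ∈ Finset.univ.filter (fun i => u i ≠ 0), u i := by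
    rw [σp, Finset.sum_filter_of_ne]
    intro i _ h h0; exact h (by rw [h0])
  rw [h1, h2]
  push_cast
  refine Finset.sum_congr rfl (fun i hi => ?_)
  simp only [Finset.mem_filter, Finset.mem_univ, true_and] at hi
  rcases zmod2_cases (u i) with h | h
  · exact absurd h hi
  · rw [h]

lemma even_norm_iff (u : Word n) : Even (hammingNorm u) ↔ σp u = 0 := by
  rw [← norm_cast_eq_σp, ZMod.natCast_eq_zero_iff, even_iff_two_dvd]

lemma mem_evenWords_iff (v : Word n) : v ∈ evenWords n ↔ σp v = 0 := by
  rw [evenWords, Set.mem_setOf_eq, hammingDist_zero_right, even_norm_iff]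

lemma dist_parity (x y : Word n) : ((hammingDist x y : ZMod 2)) = σp x + σp y := by
  rw [dist_eq_norm_add, norm_cast_eq_σp, σp_add]

/-! ### support -/

def supp (u : Word n) : Finset (Fin n) := Finset.univ.filter (fun i => u i = 1)

lemma mem_supp {u : Word n} {i : Fin n} : i ∈ supp u ↔ u i = 1 := by
  simp [supp]

lemma norm_eq_supp (u : Word n) : hammingNorm u = (supp u).card := by
  unfold hammingNorm supp
  congr 1
  ext i
  simp only [Finset.mem_filter, Finset.mem_univ, true_and]
  constructor
  · intro h; rcases zmod2_cases (u i) with h0 | h1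
    · exact absurd h0 h
    · exact h1
  · intro h; rw [h]; exact one_ne_zero

lemma supp_add (u v : Word n) : supp (u + v) = supp u ∆ supp v := by
  ext i
  simp only [mem_supp, Finset.mem_symmDiff, mem_supp, Pi.add_apply]
  rcases zmod2_cases (u i) with h | h <;> rcases zmod2_cases (v i) with h' | h' <;>
    simp [h, h']

def ind (s : Finset (Fin n)) : Word n := fun i => if i ∈ s then 1 else 0

lemma supp_ind (s : Finset (Fin n)) : supp (ind s) = s := by
  ext i; simp only [mem_supp, ind]
  split <;> simp_all

lemma supp_injective : Function.Injective (supp (n := n)) := by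
  intro u v h
  funext i
  rcases zmod2_cases (u i) with h0 | h1 <;> rcases zmod2_cases (v i) with h0' | h1'
  · rw [h0, h0']
  · exact absurd (mem_supp.mpr h1') (by rw [← h]; simp [mem_supp, h0])
  · exact absurd (mem_supp.mpr h1) (by rw [h]; simp [mem_supp, h0'])
  · rw [h1, h1']

/-! ### counting words of given norm -/

lemma card_norm_filter (k : ℕ) :
    (Finset.univ.filter (fun x : Word n => hammingNorm x = k)).card = n.choose k := by
  classical
  have hch : n.choose k = (Finset.powersetCard k (Finset.univ : Finset (Fin n))).card := by
    rw [Finset.card_powersetCard, Finset.card_univ, Fintype.card_fin]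
  rw [hch]
  refine Finset.card_bij (fun x _ => supp x) ?_ ?_ ?_
  · intro a ha
    simp only [Finset.mem_filter, Finset.mem_univ, true_and] at ha
    simp [Finset.mem_powersetCard, ← norm_eq_supp, ha]
  · intro a _ b _ h; exact supp_injective h
  · intro s hs
    refine ⟨ind s, ?_, supp_ind s⟩
    simp only [Finset.mem_powersetCard] at hs
    simp [Finset.mem_filter, norm_eq_supp, supp_ind, hs.2]

lemma ncard_setOf_eq_filter (P : Word n → Prop) [DecidablePred P] :
    {x : Word n | P x}.ncard = (Finset.univ.filter P).card := by
  classical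
  rw [Set.ncard_eq_toFinset_card']
  congr 1
  ext x
  simp only [Set.mem_toFinset, Set.mem_setOf_eq, Finset.mem_filter, Finset.mem_univ, true_and]

lemma ncard_norm (k : ℕ) : {x : Word n | hammingNorm x = k}.ncard = n.choose k := by
  classical
  rw [ncard_setOf_eq_filter, card_norm_filter]

lemma ncard_sphere (v : Word n) (k : ℕ) :
    {w : Word n | hammingDist v w = k}.ncard = n.choose k := by
  classical
  have : {w : Word n | hammingDist v w = k} = (fun u => v + u) '' {u | hammingNorm u = k} := by
    ext w
    simp only [Set.mem_setOf_eq, Set.mem_image]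
    constructor
    · intro h; exact ⟨v + w, by rwa [← dist_eq_norm_add], add_add_cancel v w⟩
    · rintro ⟨u, hu, rfl⟩; rwa [dist_eq_norm_add, add_add_cancel]
  rw [this, Set.ncard_image_of_injective _ (add_right_injective v), ncard_norm]

set_option maxRecDepth 10000 in
lemma card_odd : {x : Word 8 | σp x = 1}.ncard = 128 := by
  rw [ncard_setOf_eq_filter]
  decide

/-! ### fiber lemma -/

lemma fiber_two {t : Word n} (ht : hammingNorm t = 2) :
    {u : Word n | hammingNorm u = 1 ∧ hammingNorm (t + u) = 1}.ncard = 2 := by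
  classical
  have ht' : (supp t).card = 2 := by rw [← norm_eq_supp]; exact ht
  have hsing : ∀ i : Fin n, supp (ind ({i} : Finset (Fin n))) = {i} := fun i => supp_ind {i}
  have hset : {u : Word n | hammingNorm u = 1 ∧ hammingNorm (t + u) = 1}
      = (fun i => ind ({i} : Finset (Fin n))) '' (supp t : Set (Fin n)) := by
    ext u
    simp only [Set.mem_setOf_eq, Set.mem_image, Finset.mem_coe]
    constructor
    · rintro ⟨h1, h2⟩
      rw [norm_eq_supp] at h1
      obtain ⟨i, hi⟩ := Finset.card_eq_one.mp h1
      refine ⟨i, ?_, supp_injective (by rw [hsing, hi])⟩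
      by_contra hit
      have hii : supp (t + u) = insert i (supp t) := by
        rw [supp_add, hi]
        ext j
        simp only [Finset.mem_symmDiff, Finset.mem_singleton, Finset.mem_insert]
        constructor
        · rintro (⟨h, _⟩ | ⟨h, h'⟩)
          · right; exact h
          · left; exact h
        · rintro (rfl | h)
          · right; exact ⟨rfl, hit⟩
          · left; exact ⟨h, fun hj => hit (hj ▸ h)⟩
      rw [norm_eq_supp, hii, Finset.card_insert_of_notMem hit, ht'] at h2
      omega
    · rintro ⟨i, hi, rfl⟩
      constructor
      · rw [norm_eq_supp, hsing]; exact Finset.card_singleton i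
      · have hii : supp (t + ind ({i} : Finset (Fin n))) = (supp t).erase i := by
          rw [supp_add, hsing]
          ext j
          simp only [Finset.mem_symmDiff, Finset.mem_singleton, Finset.mem_erase]
          constructor
          · rintro (⟨h, h'⟩ | ⟨rfl, h'⟩)
            · exact ⟨fun hj => h' (hj ▸ rfl), h⟩
            · exact absurd hi h'
          · rintro ⟨h, h'⟩; left; exact ⟨h', h⟩
        rw [norm_eq_supp, hii, Finset.card_erase_of_mem hi, ht']
  have hinj : Function.Injective (fun i : Fin n => ind ({i} : Finset (Fin n))) := by
    intro i j h
    have h2 : ({i} : Finset (Fin n)) = {j} := by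
      rw [← hsing i, ← hsing j]; exact congrArg supp h
    simpa using h2
  rw [hset, Set.ncard_image_of_injective _ hinj, Set.ncard_coe_finset, ht']

/-! ### miscellaneous small tools -/

lemma zmod2_add_eq_zero {a b : ZMod 2} : a + b = 0 ↔ a = b := by revert a b; decide

lemma dist_even_iff (x y : Word n) : Even (hammingDist x y) ↔ σp x = σp y := by
  rw [even_iff_two_dvd, ← ZMod.natCast_eq_zero_iff, dist_parity, zmod2_add_eq_zero]

lemma dist_add_left (t x y : Word n) : hammingDist (t + x) (t + y) = hammingDist x y := by
  rw [dist_eq_norm_add, dist_eq_norm_add]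
  congr 1
  funext i
  have h := CharTwo.add_self_eq_zero (t i)
  simp only [Pi.add_apply]
  linear_combination h

/-! ### code lemmas -/

section CodeLemmas

variable {C : Set (Word 8)} (hCB : C ⊆ evenWords 8) (hC : IsCode 8 16 4 C)

include hCB in
lemma σp_of_mem {z : Word 8} (hz : z ∈ C) : σp z = 0 :=
  (mem_evenWords_iff z).mp (hCB hz)

include hC in
lemma code_eq {z z' : Word 8} (hz : z ∈ C) (hz' : z' ∈ C) (h : hammingDist z z' < 4) :
    z = z' := by
  by_contra hne
  exact absurd (hC.2 z hz z' hz' hne) (by omega)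

include hCB hC in
lemma G1 (s : Word 8) (hs : σp s = 1) : ∃! z, z ∈ C ∧ hammingDist s z = 1 := by
  classical
  have hfin : C.Finite := Set.toFinite C
  set Cf : Finset (Word 8) := hfin.toFinset with hCf
  have hCfcard : Cf.card = 16 := by
    rw [← Set.ncard_eq_toFinset_card C hfin, hC.1]
  set U1f : Finset (Word 8) := Finset.univ.filter (fun u => hammingNorm u = 1) with hU1f
  have hU1card : U1f.card = 8 := by
    rw [hU1f, card_norm_filter]; rfl
  set Oddf : Finset (Word 8) := Finset.univ.filter (fun x => σp x = 1) with hOddf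
  have hOddcard : Oddf.card = 128 := by
    have := card_odd
    rwa [ncard_setOf_eq_filter] at this
  have hd1 : ∀ z u : Word 8, hammingDist z (z + u) = hammingNorm u := by
    intro z u
    rw [dist_eq_norm_add, add_add_cancel]
  have hinj : Set.InjOn (fun p : Word 8 × Word 8 => p.1 + p.2) ↑(Cf ×ˢ U1f) := by
    rintro ⟨z, u⟩ hp ⟨z', u'⟩ hp' (h : z + u = z' + u')
    simp only [Finset.coe_product, Set.mem_prod, Finset.mem_coe, hCf, hU1f,
      Set.Finite.mem_toFinset, Finset.mem_filter, Finset.mem_univ, true_and] at hp hp'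
    have hzz : z = z' := by
      refine code_eq hC hp.1 hp'.1 ?_
      calc hammingDist z z' ≤ hammingDist z (z + u) + hammingDist (z + u) z' :=
            hammingDist_triangle _ _ _
        _ = hammingNorm u + hammingDist (z' + u') z' := by rw [hd1, h]
        _ = hammingNorm u + hammingNorm u' := by rw [hammingDist_comm, hd1]
        _ < 4 := by rw [hp.2, hp'.2]; omega
    subst hzz
    have : u = u' := add_left_cancel h
    rw [this]
  have himage : (Cf ×ˢ U1f).image (fun p : Word 8 × Word 8 => p.1 + p.2) = Oddf := by
    apply Finset.eq_of_subset_of_card_le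
    · intro x hx
      simp only [Finset.mem_image] at hx
      obtain ⟨⟨z, u⟩, hp, rfl⟩ := hx
      simp only [Finset.mem_product, hCf, hU1f, Set.Finite.mem_toFinset,
        Finset.mem_filter, Finset.mem_univ, true_and] at hp
      have hσu : σp u = 1 := by rw [← norm_cast_eq_σp, hp.2]; rfl
      simp only [hOddf, Finset.mem_filter, Finset.mem_univ, true_and, σp_add,
        σp_of_mem hCB hp.1, hσu, zero_add]
    · rw [hOddcard, Finset.card_image_of_injOn hinj, Finset.card_product,
        hCfcard, hU1card]
  have hsmem : s ∈ (Cf ×ˢ U1f).image (fun p : Word 8 × Word 8 => p.1 + p.2) := by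
    rw [himage]; simp only [hOddf, Finset.mem_filter, Finset.mem_univ, true_and]; exact hs
  simp only [Finset.mem_image] at hsmem
  obtain ⟨⟨z, u⟩, hp, hsum⟩ := hsmem
  simp only [Finset.mem_product, hCf, hU1f, Set.Finite.mem_toFinset,
    Finset.mem_filter, Finset.mem_univ, true_and] at hp
  refine ⟨z, ⟨hp.1, ?_⟩, ?_⟩
  · rw [← hsum, hammingDist_comm, hd1, hp.2]
  · rintro z' ⟨hz', hd'⟩
    refine code_eq hC hz' hp.1 ?_
    calc hammingDist z' z ≤ hammingDist z' s + hammingDist s z := hammingDist_triangle _ _ _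
      _ = 1 + hammingDist s z := by rw [hammingDist_comm, hd']
      _ = 1 + 1 := by rw [← hsum, hammingDist_comm, hd1, hp.2]
      _ < 4 := by omega

include hCB hC in
lemma G2 (s : Word 8) (hs : σp s = 0) (hsC : s ∉ C) :
    {z | z ∈ C ∧ hammingDist s z = 2}.ncard = 4 := by
  classical
  have hDfin : {z | z ∈ C ∧ hammingDist s z = 2}.Finite := Set.toFinite _
  set D : Finset (Word 8) := hDfin.toFinset with hD
  have hDn : {z | z ∈ C ∧ hammingDist s z = 2}.ncard = D.card :=
    Set.ncard_eq_toFinset_card _ hDfin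
  have hU1fin : {u : Word 8 | hammingNorm u = 1}.Finite := Set.toFinite _
  set U1f : Finset (Word 8) := hU1fin.toFinset with hU1f
  have hU1mem : ∀ u : Word 8, u ∈ U1f ↔ hammingNorm u = 1 := by
    intro u; rw [hU1f, Set.Finite.mem_toFinset]; rfl
  have hU1card : U1f.card = 8 := by
    rw [hU1f, ← Set.ncard_eq_toFinset_card _ hU1fin, ncard_norm]; rfl
  have hodd : ∀ u ∈ U1f, σp (s + u) = 1 := by
    intro u hu
    rw [hU1mem] at hu
    have : σp u = 1 := by rw [← norm_cast_eq_σp, hu]; rfl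
    rw [σp_add, hs, this, zero_add]
  have φex : ∀ u : Word 8, σp (s + u) = 1 → ∃! z, z ∈ C ∧ hammingDist (s + u) z = 1 :=
    fun u h => G1 hCB hC (s + u) h
  set φ : Word 8 → Word 8 := fun u =>
    if h : σp (s + u) = 1 then (φex u h).exists.choose else 0 with hφ
  have φspec : ∀ u ∈ U1f, φ u ∈ C ∧ hammingDist (s + u) (φ u) = 1 := by
    intro u hu
    have h := hodd u hu
    simp only [hφ, dif_pos h]
    exact (φex u h).exists.choose_spec
  have φuniq : ∀ u ∈ U1f, ∀ z, z ∈ C → hammingDist (s + u) z = 1 → z = φ u := by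
    intro u hu z hz hdz
    have h := hodd u hu
    obtain ⟨w, hw, huniq⟩ := φex u h
    have h1 : z = w := huniq z ⟨hz, hdz⟩
    have h2 : φ u = w := huniq (φ u) (by simpa [hφ, dif_pos h] using (φex u h).exists.choose_spec)
    rw [h1, h2]
  have φmem : ∀ u ∈ U1f, φ u ∈ D := by
    intro u hu
    obtain ⟨hzC, hdz⟩ := φspec u hu
    rw [hD, Set.Finite.mem_toFinset]
    refine ⟨hzC, ?_⟩
    have hle : hammingDist s (φ u) ≤ 2 := by
      calc hammingDist s (φ u) ≤ hammingDist s (s + u) + hammingDist (s + u) (φ u) :=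
            hammingDist_triangle _ _ _
        _ ≤ 1 + 1 := by
            have h1 : hammingDist s (s + u) = hammingNorm u := by
              rw [dist_eq_norm_add, add_add_cancel]
            rw [hU1mem] at hu
            rw [h1, hu, hdz]
        _ = 2 := rfl
    have hne : hammingDist s (φ u) ≠ 0 := by
      intro h0
      exact hsC (by rwa [eq_of_hammingDist_eq_zero h0])
    have heven : Even (hammingDist s (φ u)) := by
      rw [dist_even_iff, hs, σp_of_mem hCB hzC]
    obtain ⟨k, hk⟩ := heven
    omega
  have hfib : ∀ z ∈ D, (U1f.filter (fun u => φ u = z)).card = 2 := by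
    intro z hz
    rw [hD, Set.Finite.mem_toFinset] at hz
    have ht : hammingNorm (s + z) = 2 := by rw [← dist_eq_norm_add, hz.2]
    have hsetEq : {u : Word 8 | hammingNorm u = 1 ∧ hammingNorm (s + z + u) = 1}
        = {u : Word 8 | hammingNorm u = 1 ∧ φ u = z} := by
      ext u
      simp only [Set.mem_setOf_eq]
      constructor
      · rintro ⟨hu1, hu2⟩
        have huU : u ∈ U1f := (hU1mem u).mpr hu1
        refine ⟨hu1, (φuniq u huU z hz.1 ?_).symm⟩
        rw [dist_eq_norm_add, ← hu2]
        congr 1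
        funext i; simp only [Pi.add_apply]; ring
      · rintro ⟨hu1, hu2⟩
        have huU : u ∈ U1f := (hU1mem u).mpr hu1
        refine ⟨hu1, ?_⟩
        have hd := (φspec u huU).2
        rw [hu2] at hd
        rw [← hd, dist_eq_norm_add]
        congr 1
        funext i; simp only [Pi.add_apply]; ring
    have hffin : {u : Word 8 | hammingNorm u = 1 ∧ φ u = z}.Finite := Set.toFinite _
    have hfe : U1f.filter (fun u => φ u = z) = hffin.toFinset := by
      ext u
      rw [Finset.mem_filter, hU1mem u, Set.Finite.mem_toFinset]
      exact Iff.rfl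
    rw [hfe, ← Set.ncard_eq_toFinset_card _ hffin, ← hsetEq, fiber_two ht]
  have hcount := Finset.card_eq_sum_card_fiberwise φmem
  rw [hU1card, Finset.sum_congr rfl hfib, Finset.sum_const, smul_eq_mul] at hcount
  rw [hDn]
  omega

include hC in
lemma G2' (s : Word 8) (hsC : s ∈ C) :
    {z | z ∈ C ∧ hammingDist s z = 2}.ncard = 0 := by
  have : {z | z ∈ C ∧ hammingDist s z = 2} = ∅ := by
    ext z
    simp only [Set.mem_setOf_eq, Set.mem_empty_iff_false, iff_false, not_and]
    intro hz hd
    have : s = z := code_eq hC hsC hz (by omega)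
    rw [this, hammingDist_self] at hd
    omega
  rw [this, Set.ncard_empty]

end CodeLemmas

/-! ### more distance tools -/

lemma dist_congr {x y x' y' : Word n} (h : x + y = x' + y') :
    hammingDist x y = hammingDist x' y' := by
  rw [dist_eq_norm_add, dist_eq_norm_add, h]

lemma add_add_cancel' (x y : Word n) : x + y + y = x := by
  funext i
  have h := CharTwo.add_self_eq_zero (y i)
  simp only [Pi.add_apply]
  linear_combination h

lemma dist_mod_two (x y : Word n) :
    hammingDist x y % 2 = if σp x = σp y then 0 else 1 := by
  split
  next h => exact Nat.even_iff.mp (dist_even_iff x y |>.mpr h)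
  next h =>
    have h1 : ¬ Even (hammingDist x y) := fun he => h ((dist_even_iff x y).mp he)
    have h2 : ¬ hammingDist x y % 2 = 0 := fun hh => h1 (Nat.even_iff.mpr hh)
    omega

/-! ### blocks -/

def q1 (w : Word 24) : Word 8 := fun i => w (Fin.castAdd 8 (Fin.castAdd 8 i))
def q2 (w : Word 24) : Word 8 := fun i => w (Fin.castAdd 8 (Fin.natAdd 8 i))
def q3 (w : Word 24) : Word 8 := fun i => w (Fin.natAdd 16 i)

lemma q1_cat3 (a b c : Word 8) : q1 (cat3 a b c) = a := by
  funext i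
  show Fin.append (Fin.append a b) c (Fin.castAdd 8 (Fin.castAdd 8 i)) = a i
  rw [Fin.append_left, Fin.append_left]

lemma q2_cat3 (a b c : Word 8) : q2 (cat3 a b c) = b := by
  funext i
  show Fin.append (Fin.append a b) c (Fin.castAdd 8 (Fin.natAdd 8 i)) = b i
  rw [Fin.append_left, Fin.append_right]

lemma q3_cat3 (a b c : Word 8) : q3 (cat3 a b c) = c := by
  funext i
  show Fin.append (Fin.append a b) c (Fin.natAdd 16 i) = c i
  rw [Fin.append_right]

lemma cat3_q (w : Word 24) : cat3 (q1 w) (q2 w) (q3 w) = w := by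
  funext i
  refine Fin.addCases (motive := fun j : Fin (16 + 8) =>
    cat3 (q1 w) (q2 w) (q3 w) j = w j) ?_ ?_ i
  · intro j
    show Fin.append (Fin.append (q1 w) (q2 w)) (q3 w) (Fin.castAdd 8 j) = _
    rw [Fin.append_left]
    refine Fin.addCases (motive := fun j : Fin (8 + 8) =>
      Fin.append (q1 w) (q2 w) j = w (Fin.castAdd 8 j)) ?_ ?_ j
    · intro k; rw [Fin.append_left]; rfl
    · intro k; rw [Fin.append_right]; rfl
  · intro j
    show Fin.append (Fin.append (q1 w) (q2 w)) (q3 w) (Fin.natAdd 16 j) = _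
    rw [Fin.append_right]; rfl

lemma dist_append {m k : ℕ} (u x : Word m) (v y : Word k) :
    hammingDist (Fin.append u v) (Fin.append x y) = hammingDist u x + hammingDist v y := by
  have h0 : hammingDist (Fin.append u v) (Fin.append x y)
      = ∑ i : Fin (m + k), if Fin.append u v i ≠ Fin.append x y i then 1 else 0 :=
    Finset.card_filter _ _
  rw [h0, Fin.sum_univ_add]
  simp only [Fin.append_left, Fin.append_right]
  congr 1
  · exact (Finset.card_filter _ _).symm
  · exact (Finset.card_filter _ _).symm

lemma dist_cat3 (a b c x y z : Word 8) :
    hammingDist (cat3 a b c) (cat3 x y z)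
      = hammingDist a x + hammingDist b y + hammingDist c z := by
  have h1 : hammingDist (Fin.append (Fin.append a b) c) (Fin.append (Fin.append x y) z)
      = hammingDist (Fin.append a b) (Fin.append x y) + hammingDist c z :=
    dist_append _ _ _ _
  have h2 : hammingDist (Fin.append a b) (Fin.append x y)
      = hammingDist a x + hammingDist b y := dist_append _ _ _ _
  exact h1.trans (by rw [h2])

lemma σp_append {m k : ℕ} (u : Word m) (v : Word k) :
    σp (Fin.append u v) = σp u + σp v := by
  show ∑ i : Fin (m + k), Fin.append u v i = _
  rw [Fin.sum_univ_add]
  simp only [Fin.append_left, Fin.append_right]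
  rfl

lemma σp_cat3 (a b c : Word 8) : σp (cat3 a b c) = σp a + σp b + σp c := by
  have h1 : σp (Fin.append (Fin.append a b) c) = σp (Fin.append a b) + σp c := σp_append _ _
  have h2 : σp (Fin.append a b) = σp a + σp b := σp_append _ _
  exact h1.trans (by rw [h2])

/-- the coloring set -/
def Lset (C : Set (Word 8)) : Set (Word 24) :=
  {w | ∃ x ∈ evenWords 8, ∃ y ∈ evenWords 8, ∃ z ∈ C, w = cat3 x y (y + z)}

lemma mem_Lset_iff (C : Set (Word 8)) (w : Word 24) :
    w ∈ Lset C ↔ σp (q1 w) = 0 ∧ σp (q2 w) = 0 ∧ q2 w + q3 w ∈ C := by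
  constructor
  · rintro ⟨x, hx, y, hy, z, hz, rfl⟩
    rw [q1_cat3, q2_cat3, q3_cat3]
    exact ⟨(mem_evenWords_iff x).mp hx, (mem_evenWords_iff y).mp hy, by rwa [add_add_cancel]⟩
  · rintro ⟨h1, h2, h3⟩
    refine ⟨q1 w, (mem_evenWords_iff _).mpr h1, q2 w, (mem_evenWords_iff _).mpr h2,
      q2 w + q3 w, h3, ?_⟩
    rw [add_add_cancel]
    exact (cat3_q w).symm

/-! ### the triple sets -/

def tripSet (C : Set (Word 8)) (a b c : Word 8) : Set (Word 8 × Word 8 × Word 8) :=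
  {p | hammingDist a p.1 + hammingDist b p.2.1 + hammingDist c p.2.2 = 2 ∧
    σp p.1 = 0 ∧ σp p.2.1 = 0 ∧ p.2.1 + p.2.2 ∈ C}

section Counts

variable {C : Set (Word 8)} (hCB : C ⊆ evenWords 8) (hC : IsCode 8 16 4 C)

include hCB in
lemma σz_of {y z : Word 8} (hy : σp y = 0) (hyz : y + z ∈ C) : σp z = 0 := by
  have h := σp_of_mem hCB hyz
  rwa [σp_add, hy, zero_add] at h

include hCB hC in
lemma countA {a b c : Word 8} (ha : σp a = 0) (hb : σp b = 0) (hbc : b + c ∈ C) :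
    (tripSet C a b c).ncard = 28 := by
  have hσc : σp c = 0 := σz_of hCB hb hbc
  have hset : tripSet C a b c = (fun x => (x, b, c)) '' {x | hammingDist a x = 2} := by
    ext ⟨x, y, z⟩
    simp only [tripSet, Set.mem_setOf_eq, Set.mem_image]
    constructor
    · rintro ⟨hsum, hx, hy, hyz⟩
      have hz : σp z = 0 := σz_of hCB hy hyz
      have m1 : hammingDist a x % 2 = 0 := by rw [dist_mod_two]; simp [ha, hx]
      have m2 : hammingDist b y % 2 = 0 := by rw [dist_mod_two]; simp [hb, hy]
      have m3 : hammingDist c z % 2 = 0 := by rw [dist_mod_two]; simp [hσc, hz]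
      have hcases : (hammingDist a x = 2 ∧ hammingDist b y = 0 ∧ hammingDist c z = 0) ∨
          (hammingDist a x = 0 ∧ hammingDist b y = 2 ∧ hammingDist c z = 0) ∨
          (hammingDist a x = 0 ∧ hammingDist b y = 0 ∧ hammingDist c z = 2) := by omega
      rcases hcases with ⟨h1, h2, h3⟩ | ⟨h1, h2, h3⟩ | ⟨h1, h2, h3⟩
      · obtain rfl := eq_of_hammingDist_eq_zero h2
        obtain rfl := eq_of_hammingDist_eq_zero h3
        exact ⟨x, h1, rfl⟩
      · obtain rfl := eq_of_hammingDist_eq_zero h1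
        obtain rfl := eq_of_hammingDist_eq_zero h3
        exfalso
        have hd : hammingDist (y + c) (b + c) = hammingDist y b := dist_congr (by
          funext i
          have hcc := CharTwo.add_self_eq_zero (c i)
          simp only [Pi.add_apply]
          linear_combination hcc)
        have heq : y + c = b + c := code_eq hC hyz hbc (by
          rw [hd, hammingDist_comm] at *; omega)
        have : y = b := by
          have := congrArg (fun t => t + c) heq
          simpa [add_add_cancel'] using this
        rw [this, hammingDist_self] at h2
        omega
      · obtain rfl := eq_of_hammingDist_eq_zero h1
        obtain rfl := eq_of_hammingDist_eq_zero h2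
        exfalso
        have heq : b + z = b + c := code_eq hC hyz hbc (by
          have hd : hammingDist (b + z) (b + c) = hammingDist z c := dist_add_left _ _ _
          rw [hd, hammingDist_comm] at *; omega)
        have : z = c := add_left_cancel heq
        rw [this, hammingDist_self] at h3
        omega
    · rintro ⟨x', hx', heq⟩
      obtain ⟨rfl, rfl, rfl⟩ : x' = x ∧ b = y ∧ c = z := by
        refine ⟨congrArg Prod.fst heq, ?_, ?_⟩
        · exact congrArg (fun p => p.2.1) heq
        · exact congrArg (fun p => p.2.2) heq
      refine ⟨by rw [hammingDist_self, hammingDist_self]; omega, ?_, hb, hbc⟩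
      have : Even (hammingDist a x') := by rw [hx']; exact ⟨1, rfl⟩
      rw [dist_even_iff] at this
      rw [← this, ha]
  rw [hset, Set.ncard_image_of_injective _ (fun u v h => congrArg Prod.fst h),
    ncard_sphere]
  rfl

include hCB hC in
lemma countB {a b c : Word 8} (ha : σp a = 0) (hb : σp b = 0) (hc : σp c = 0)
    (hbc : b + c ∉ C) : (tripSet C a b c).ncard = 8 := by
  set S1 : Set (Word 8 × Word 8 × Word 8) :=
    (fun y => (a, y, c)) '' {y | hammingDist b y = 2 ∧ y + c ∈ C} with hS1
  set S2 : Set (Word 8 × Word 8 × Word 8) :=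
    (fun z => (a, b, z)) '' {z | hammingDist c z = 2 ∧ b + z ∈ C} with hS2
  have hset : tripSet C a b c = S1 ∪ S2 := by
    ext ⟨x, y, z⟩
    simp only [tripSet, Set.mem_setOf_eq, Set.mem_union, hS1, hS2, Set.mem_image]
    constructor
    · rintro ⟨hsum, hx, hy, hyz⟩
      have hz : σp z = 0 := σz_of hCB hy hyz
      have m1 : hammingDist a x % 2 = 0 := by rw [dist_mod_two]; simp [ha, hx]
      have m2 : hammingDist b y % 2 = 0 := by rw [dist_mod_two]; simp [hb, hy]
      have m3 : hammingDist c z % 2 = 0 := by rw [dist_mod_two]; simp [hc, hz]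
      have hcases : (hammingDist a x = 2 ∧ hammingDist b y = 0 ∧ hammingDist c z = 0) ∨
          (hammingDist a x = 0 ∧ hammingDist b y = 2 ∧ hammingDist c z = 0) ∨
          (hammingDist a x = 0 ∧ hammingDist b y = 0 ∧ hammingDist c z = 2) := by omega
      rcases hcases with ⟨h1, h2, h3⟩ | ⟨h1, h2, h3⟩ | ⟨h1, h2, h3⟩
      · obtain rfl := eq_of_hammingDist_eq_zero h2
        obtain rfl := eq_of_hammingDist_eq_zero h3
        exact absurd hyz hbc
      · obtain rfl := eq_of_hammingDist_eq_zero h1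
        obtain rfl := eq_of_hammingDist_eq_zero h3
        exact Or.inl ⟨y, ⟨h2, hyz⟩, rfl⟩
      · obtain rfl := eq_of_hammingDist_eq_zero h1
        obtain rfl := eq_of_hammingDist_eq_zero h2
        exact Or.inr ⟨z, ⟨h3, hyz⟩, rfl⟩
    · rintro (⟨y', ⟨hd, hyC⟩, heq⟩ | ⟨z', ⟨hd, hzC⟩, heq⟩)
      · obtain ⟨rfl, rfl, rfl⟩ : a = x ∧ y' = y ∧ c = z :=
          ⟨congrArg Prod.fst heq, congrArg (fun p => p.2.1) heq,
            congrArg (fun p => p.2.2) heq⟩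
        have hy' : σp y' = 0 := by
          have : Even (hammingDist b y') := by rw [hd]; exact ⟨1, rfl⟩
          rw [dist_even_iff] at this
          rw [← this, hb]
        exact ⟨by rw [hammingDist_self, hammingDist_self]; omega, ha, hy', hyC⟩
      · obtain ⟨rfl, rfl, rfl⟩ : a = x ∧ b = y ∧ z' = z :=
          ⟨congrArg Prod.fst heq, congrArg (fun p => p.2.1) heq,
            congrArg (fun p => p.2.2) heq⟩
        exact ⟨by rw [hammingDist_self, hammingDist_self]; omega, ha, hb, hzC⟩
  have hdisj : Disjoint S1 S2 := by
    rw [Set.disjoint_left]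
    rintro p ⟨y, ⟨hd, _⟩, rfl⟩ ⟨z, ⟨_, _⟩, heq⟩
    have : b = y := congrArg (fun p => p.2.1) heq
    rw [← this, hammingDist_self] at hd
    omega
  have hσbc : σp (b + c) = 0 := by rw [σp_add, hb, hc, add_zero]
  have hG2 := G2 hCB hC (b + c) hσbc hbc
  have hcard1 : S1.ncard = 4 := by
    have himg : {y | hammingDist b y = 2 ∧ y + c ∈ C}
        = (fun z' => z' + c) '' {z' | z' ∈ C ∧ hammingDist (b + c) z' = 2} := by
      ext y
      simp only [Set.mem_setOf_eq, Set.mem_image]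
      constructor
      · rintro ⟨hd, hyC⟩
        refine ⟨y + c, ⟨hyC, ?_⟩, add_add_cancel' y c⟩
        refine (dist_congr (x' := b) (y' := y) ?_).trans hd
        funext i
        have hcc := CharTwo.add_self_eq_zero (c i)
        simp only [Pi.add_apply]
        linear_combination hcc
      · rintro ⟨z', ⟨hzC, hd⟩, rfl⟩
        constructor
        · refine (dist_congr (x' := b + c) (y' := z') ?_).trans hd
          funext i
          simp only [Pi.add_apply]
          ring
        · rwa [add_add_cancel']
    rw [hS1, Set.ncard_image_of_injective _ (fun u v h => congrArg (fun p => p.2.1) h),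
      himg, Set.ncard_image_of_injective _ (add_left_injective c), hG2]
  have hcard2 : S2.ncard = 4 := by
    have himg : {z | hammingDist c z = 2 ∧ b + z ∈ C}
        = (fun z' => b + z') '' {z' | z' ∈ C ∧ hammingDist (b + c) z' = 2} := by
      ext z
      simp only [Set.mem_setOf_eq, Set.mem_image]
      constructor
      · rintro ⟨hd, hzC⟩
        refine ⟨b + z, ⟨hzC, ?_⟩, add_add_cancel b z⟩
        refine (dist_congr (x' := c) (y' := z) ?_).trans hd
        funext i
        have hcc := CharTwo.add_self_eq_zero (b i)
        simp only [Pi.add_apply]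
        linear_combination hcc
      · rintro ⟨z', ⟨hzC, hd⟩, rfl⟩
        constructor
        · refine (dist_congr (x' := b + c) (y' := z') ?_).trans hd
          funext i
          simp only [Pi.add_apply]
          ring
        · rwa [add_add_cancel]
    rw [hS2, Set.ncard_image_of_injective _ (fun u v h => congrArg (fun p => p.2.2) h),
      himg, Set.ncard_image_of_injective _ (add_right_injective b), hG2]
  rw [hset, Set.ncard_union_eq hdisj, hcard1, hcard2]

include hCB hC in
lemma countC {a b c : Word 8} (ha : σp a = 0) (hb : σp b = 1) (hc : σp c = 1) :
    (tripSet C a b c).ncard = 8 := by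
  set P : Set (Word 8 × Word 8) :=
    {p | hammingDist b p.1 = 1 ∧ hammingDist c p.2 = 1 ∧ p.1 + p.2 ∈ C} with hP
  have hset : tripSet C a b c = (fun p : Word 8 × Word 8 => (a, p.1, p.2)) '' P := by
    ext ⟨x, y, z⟩
    simp only [tripSet, Set.mem_setOf_eq, Set.mem_image, hP]
    constructor
    · rintro ⟨hsum, hx, hy, hyz⟩
      have hz : σp z = 0 := σz_of hCB hy hyz
      have m1 : hammingDist a x % 2 = 0 := by rw [dist_mod_two]; simp [ha, hx]
      have m2 : hammingDist b y % 2 = 1 := by rw [dist_mod_two]; simp [hb, hy]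
      have m3 : hammingDist c z % 2 = 1 := by rw [dist_mod_two]; simp [hc, hz]
      have h1 : hammingDist a x = 0 := by omega
      rw [h1] at hsum
      obtain rfl := eq_of_hammingDist_eq_zero h1
      exact ⟨(y, z), ⟨show hammingDist b y = 1 by omega,
        show hammingDist c z = 1 by omega, hyz⟩, rfl⟩
    · rintro ⟨⟨y', z'⟩, ⟨hd1, hd2, hyz⟩, heq⟩
      have hd1' : hammingDist b y' = 1 := hd1
      have hd2' : hammingDist c z' = 1 := hd2
      have hyzC : y' + z' ∈ C := hyz
      obtain ⟨rfl, rfl, rfl⟩ : a = x ∧ y' = y ∧ z' = z :=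
        ⟨congrArg Prod.fst heq, congrArg (fun p => p.2.1) heq,
          congrArg (fun p => p.2.2) heq⟩
      have hy' : σp y' = 0 := by
        have hodd : ¬ Even (hammingDist b y') := by rw [hd1']; decide
        rw [dist_even_iff, hb] at hodd
        rcases zmod2_cases (σp y') with h | h
        · exact h
        · exact absurd h.symm hodd
      exact ⟨by rw [hammingDist_self]; omega, ha, hy', hyzC⟩
  have hPcard : P.ncard = 8 := by
    have himg : (fun p : Word 8 × Word 8 => b + p.1) '' P = {u | hammingNorm u = 1} := by
      apply Set.Subset.antisymm
      · rintro u ⟨⟨y, z⟩, ⟨hd1, _, _⟩, rfl⟩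
        show hammingNorm (b + y) = 1
        rw [← dist_eq_norm_add, hd1]
      · rintro u hu
        have hy : hammingDist b (b + u) = 1 := by
          rw [dist_eq_norm_add, add_add_cancel]; exact hu
        have hσy : σp (b + u) = 0 := by
          have hodd : ¬ Even (hammingDist b (b + u)) := by rw [hy]; decide
          rw [dist_even_iff, hb] at hodd
          rcases zmod2_cases (σp (b + u)) with h | h
          · exact h
          · exact absurd h.symm hodd
        have hσs : σp (b + u + c) = 1 := by rw [σp_add, hσy, hc, zero_add]
        obtain ⟨z₀, ⟨hz₀C, hz₀d⟩, _⟩ := G1 hCB hC (b + u + c) hσs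
        refine ⟨(b + u, b + u + z₀), ⟨hy, ?_, ?_⟩, ?_⟩
        · refine (dist_congr (x' := b + u + c) (y' := z₀) ?_).trans hz₀d
          funext i; simp only [Pi.add_apply]; ring
        · show b + u + (b + u + z₀) ∈ C
          rwa [add_add_cancel]
        · show b + (b + u) = u
          rw [add_add_cancel]
    have hinjOn : Set.InjOn (fun p : Word 8 × Word 8 => b + p.1) P := by
      rintro ⟨y, z⟩ hyz ⟨y', z'⟩ hyz' (h : b + y = b + y')
      have hyy : y = y' := add_left_cancel h
      subst hyy
      simp only [hP, Set.mem_setOf_eq] at hyz hyz'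
      have hσy : σp y = 0 := by
        have hodd : ¬ Even (hammingDist b y) := by rw [hyz.1]; decide
        rw [dist_even_iff, hb] at hodd
        rcases zmod2_cases (σp y) with hh | hh
        · exact hh
        · exact absurd hh.symm hodd
      have hσs : σp (y + c) = 1 := by rw [σp_add, hσy, hc, zero_add]
      obtain ⟨w₀, _, huniq⟩ := G1 hCB hC (y + c) hσs
      have e1 : y + z = w₀ := huniq _ ⟨hyz.2.2, by
        refine (dist_congr (x' := c) (y' := z) ?_).trans hyz.2.1
        funext i
        have hyy := CharTwo.add_self_eq_zero (y i)
        simp only [Pi.add_apply]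
        linear_combination hyy⟩
      have e2 : y + z' = w₀ := huniq _ ⟨hyz'.2.2, by
        refine (dist_congr (x' := c) (y' := z') ?_).trans hyz'.2.1
        funext i
        have hyy := CharTwo.add_self_eq_zero (y i)
        simp only [Pi.add_apply]
        linear_combination hyy⟩
      have : z = z' := add_left_cancel (e1.trans e2.symm)
      rw [this]
    have := Set.ncard_image_of_injOn hinjOn
    rw [himg] at this
    rw [← this, ncard_norm]
    rfl
  have hinj : Function.Injective (fun p : Word 8 × Word 8 => ((a, p.1, p.2) :
      Word 8 × Word 8 × Word 8)) := by
    rintro ⟨y, z⟩ ⟨y', z'⟩ h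
    have h1 : y = y' := congrArg (fun p => p.2.1) h
    have h2 : z = z' := congrArg (fun p => p.2.2) h
    rw [h1, h2]
  rw [hset, Set.ncard_image_of_injective _ hinj, hPcard]

include hCB hC in
lemma countD {a b c : Word 8} (ha : σp a = 1) (hb : σp b = 0) (hc : σp c = 1) :
    (tripSet C a b c).ncard = 8 := by
  have hσs : σp (b + c) = 1 := by rw [σp_add, hb, hc, zero_add]
  obtain ⟨z₀, ⟨hz₀C, hz₀d⟩, huniq⟩ := G1 hCB hC (b + c) hσs
  have hset : tripSet C a b c = (fun x => (x, b, b + z₀)) '' {x | hammingDist a x = 1} := by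
    ext ⟨x, y, z⟩
    simp only [tripSet, Set.mem_setOf_eq, Set.mem_image]
    constructor
    · rintro ⟨hsum, hx, hy, hyz⟩
      have hz : σp z = 0 := σz_of hCB hy hyz
      have m1 : hammingDist a x % 2 = 1 := by rw [dist_mod_two]; simp [ha, hx]
      have m2 : hammingDist b y % 2 = 0 := by rw [dist_mod_two]; simp [hb, hy]
      have m3 : hammingDist c z % 2 = 1 := by rw [dist_mod_two]; simp [hc, hz]
      have h2 : hammingDist b y = 0 := by omega
      obtain rfl := eq_of_hammingDist_eq_zero h2
      have hzz : b + z = z₀ := huniq _ ⟨hyz, by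
        have : hammingDist (b + c) (b + z) = hammingDist c z := dist_add_left _ _ _
        rw [this]; omega⟩
      refine ⟨x, by omega, ?_⟩
      have : z = b + z₀ := by rw [← hzz, add_add_cancel]
      rw [this]
    · rintro ⟨x', hx', heq⟩
      obtain ⟨rfl, rfl, rfl⟩ : x' = x ∧ b = y ∧ b + z₀ = z :=
        ⟨congrArg Prod.fst heq, congrArg (fun p => p.2.1) heq,
          congrArg (fun p => p.2.2) heq⟩
      have hσx : σp x' = 0 := by
        have hodd : ¬ Even (hammingDist a x') := by rw [hx']; decide
        rw [dist_even_iff, ha] at hodd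
        rcases zmod2_cases (σp x') with h | h
        · exact h
        · exact absurd h.symm hodd
      have hd3 : hammingDist c (b + z₀) = 1 := by
        refine (dist_congr (x' := b + c) (y' := z₀) ?_).trans hz₀d
        funext i; simp only [Pi.add_apply]; ring
      refine ⟨by rw [hammingDist_self, hx', hd3], hσx, hb, by rwa [add_add_cancel]⟩
  rw [hset, Set.ncard_image_of_injective _ (fun u v h => congrArg Prod.fst h),
    ncard_sphere]
  rfl

include hCB hC in
lemma countE {a b c : Word 8} (ha : σp a = 1) (hb : σp b = 1) (hc : σp c = 0) :
    (tripSet C a b c).ncard = 8 := by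
  have hσs : σp (b + c) = 1 := by rw [σp_add, hb, hc, add_zero]
  obtain ⟨z₀, ⟨hz₀C, hz₀d⟩, huniq⟩ := G1 hCB hC (b + c) hσs
  have hset : tripSet C a b c = (fun x => (x, z₀ + c, c)) '' {x | hammingDist a x = 1} := by
    ext ⟨x, y, z⟩
    simp only [tripSet, Set.mem_setOf_eq, Set.mem_image]
    constructor
    · rintro ⟨hsum, hx, hy, hyz⟩
      have hz : σp z = 0 := σz_of hCB hy hyz
      have m1 : hammingDist a x % 2 = 1 := by rw [dist_mod_two]; simp [ha, hx]
      have m2 : hammingDist b y % 2 = 1 := by rw [dist_mod_two]; simp [hb, hy]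
      have m3 : hammingDist c z % 2 = 0 := by rw [dist_mod_two]; simp [hc, hz]
      have h3 : hammingDist c z = 0 := by omega
      obtain rfl := eq_of_hammingDist_eq_zero h3
      have hzz : y + c = z₀ := huniq _ ⟨hyz, by
        have h4 : hammingDist (b + c) (y + c) = hammingDist b y := dist_congr (by
          funext i
          have hcc := CharTwo.add_self_eq_zero (c i)
          simp only [Pi.add_apply]
          linear_combination hcc)
        rw [h4]; omega⟩
      refine ⟨x, by omega, ?_⟩
      have : y = z₀ + c := by
        rw [← hzz]
        exact (add_add_cancel' y c).symm
      rw [this]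
    · rintro ⟨x', hx', heq⟩
      obtain ⟨rfl, rfl, rfl⟩ : x' = x ∧ z₀ + c = y ∧ c = z :=
        ⟨congrArg Prod.fst heq, congrArg (fun p => p.2.1) heq,
          congrArg (fun p => p.2.2) heq⟩
      have hσx : σp x' = 0 := by
        have hodd : ¬ Even (hammingDist a x') := by rw [hx']; decide
        rw [dist_even_iff, ha] at hodd
        rcases zmod2_cases (σp x') with h | h
        · exact h
        · exact absurd h.symm hodd
      have hd2 : hammingDist b (z₀ + c) = 1 := by
        refine (dist_congr (x' := b + c) (y' := z₀) ?_).trans hz₀d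
        funext i
        simp only [Pi.add_apply]
        ring
      have hσz₀ : σp z₀ = 0 := σp_of_mem hCB hz₀C
      have hσy : σp (z₀ + c) = 0 := by rw [σp_add, hσz₀, hc, add_zero]
      refine ⟨by rw [hammingDist_self, hx', hd2], hσx, hσy, by rwa [add_add_cancel']⟩
  rw [hset, Set.ncard_image_of_injective _ (fun u v h => congrArg Prod.fst h),
    ncard_sphere]
  rfl

open scoped Classical in
include hCB hC in
lemma count_in (v : Word 24) (hv : v ∈ evenWords 24) :
    {w | w ∈ evenWords 24 ∧ hammingDist v w = 2 ∧ w ∈ Lset C}.ncard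
      = if v ∈ Lset C then 28 else 8 := by
  have hab : v = cat3 (q1 v) (q2 v) (q3 v) := (cat3_q v).symm
  have hσv : σp v = 0 := (mem_evenWords_iff v).mp hv
  have hσsum : σp (q1 v) + σp (q2 v) + σp (q3 v) = 0 := by
    rw [← σp_cat3, ← hab]; exact hσv
  have hT : ∀ w, hammingDist v w = 2 → w ∈ evenWords 24 := by
    intro w h
    rw [mem_evenWords_iff]
    have he : Even (hammingDist v w) := by rw [h]; exact ⟨1, rfl⟩
    rw [dist_even_iff] at he
    rw [← he]
    exact hσv
  have hE : {w | w ∈ evenWords 24 ∧ hammingDist v w = 2 ∧ w ∈ Lset C}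
      = (fun p : Word 8 × Word 8 × Word 8 => cat3 p.1 p.2.1 p.2.2) ''
        tripSet C (q1 v) (q2 v) (q3 v) := by
    ext w
    simp only [Set.mem_setOf_eq, Set.mem_image]
    constructor
    · rintro ⟨hwV, hd, hwL⟩
      refine ⟨(q1 w, q2 w, q3 w), ?_, cat3_q w⟩
      obtain ⟨h1, h2, h3⟩ := (mem_Lset_iff C w).mp hwL
      refine ⟨?_, h1, h2, h3⟩
      show hammingDist (q1 v) (q1 w) + hammingDist (q2 v) (q2 w)
        + hammingDist (q3 v) (q3 w) = 2
      have hsplit : hammingDist v w = hammingDist (q1 v) (q1 w)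
          + hammingDist (q2 v) (q2 w) + hammingDist (q3 v) (q3 w) := by
        conv_lhs => rw [hab, ← cat3_q w]
        exact dist_cat3 _ _ _ _ _ _
      omega
    · rintro ⟨⟨x, y, z⟩, ⟨hsum, h1, h2, h3⟩, rfl⟩
      have hsum' : hammingDist (q1 v) x + hammingDist (q2 v) y
          + hammingDist (q3 v) z = 2 := hsum
      have hd : hammingDist v (cat3 x y z) = 2 := by
        have hdc := dist_cat3 (q1 v) (q2 v) (q3 v) x y z
        rw [← hab] at hdc
        omega
      refine ⟨hT _ hd, hd, ?_⟩
      rw [mem_Lset_iff, q1_cat3, q2_cat3, q3_cat3]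
      exact ⟨h1, h2, h3⟩
  have hTinj : Function.Injective
      (fun p : Word 8 × Word 8 × Word 8 => cat3 p.1 p.2.1 p.2.2) := by
    rintro ⟨x, y, z⟩ ⟨x', y', z'⟩ h
    have h' : cat3 x y z = cat3 x' y' z' := h
    have e1 : x = x' := by rw [← q1_cat3 x y z, ← q1_cat3 x' y' z', h']
    have e2 : y = y' := by rw [← q2_cat3 x y z, ← q2_cat3 x' y' z', h']
    have e3 : z = z' := by rw [← q3_cat3 x y z, ← q3_cat3 x' y' z', h']
    rw [e1, e2, e3]
  rw [hE, Set.ncard_image_of_injective _ hTinj]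
  by_cases hvL : v ∈ Lset C
  · rw [if_pos hvL]
    obtain ⟨h1, h2, h3⟩ := (mem_Lset_iff C v).mp hvL
    exact countA hCB hC h1 h2 h3
  · rw [if_neg hvL]
    rcases zmod2_cases (σp (q1 v)) with ha | ha <;>
      rcases zmod2_cases (σp (q2 v)) with hb | hb
    · have hc : σp (q3 v) = 0 := by
        rw [ha, hb] at hσsum
        simpa using hσsum
      have hbc : q2 v + q3 v ∉ C := fun h => hvL ((mem_Lset_iff C v).mpr ⟨ha, hb, h⟩)
      exact countB hCB hC ha hb hc hbc
    · have hc : σp (q3 v) = 1 := by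
        rcases zmod2_cases (σp (q3 v)) with hc | hc
        · rw [ha, hb, hc] at hσsum
          exact absurd hσsum (by decide)
        · exact hc
      exact countC hCB hC ha hb hc
    · have hc : σp (q3 v) = 1 := by
        rcases zmod2_cases (σp (q3 v)) with hc | hc
        · rw [ha, hb, hc] at hσsum
          exact absurd hσsum (by decide)
        · exact hc
      exact countD hCB hC ha hb hc
    · have hc : σp (q3 v) = 0 := by
        rcases zmod2_cases (σp (q3 v)) with hc | hc
        · exact hc
        · rw [ha, hb, hc] at hσsum
          exact absurd hσsum (by decide)
      exact countE hCB hC ha hb hc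

lemma count_all (v : Word 24) (hv : v ∈ evenWords 24) :
    {w | w ∈ evenWords 24 ∧ hammingDist v w = 2}.ncard = 276 := by
  have hσv : σp v = 0 := (mem_evenWords_iff v).mp hv
  have hT : ∀ w, hammingDist v w = 2 → w ∈ evenWords 24 := by
    intro w h
    rw [mem_evenWords_iff]
    have he : Even (hammingDist v w) := by rw [h]; exact ⟨1, rfl⟩
    rw [dist_even_iff] at he
    rw [← he]
    exact hσv
  have hE : {w | w ∈ evenWords 24 ∧ hammingDist v w = 2} = {w | hammingDist v w = 2} := by
    ext w
    exact ⟨fun h => h.2, fun h => ⟨hT w h, h⟩⟩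
  rw [hE, ncard_sphere]
  decide

open scoped Classical in
include hCB hC in
lemma count_out (v : Word 24) (hv : v ∈ evenWords 24) :
    {w | w ∈ evenWords 24 ∧ hammingDist v w = 2 ∧ w ∉ Lset C}.ncard
      = if v ∈ Lset C then 248 else 268 := by
  have hin := count_in hCB hC v hv
  have hall := count_all v hv
  have hunion : {w | w ∈ evenWords 24 ∧ hammingDist v w = 2 ∧ w ∈ Lset C}
      ∪ {w | w ∈ evenWords 24 ∧ hammingDist v w = 2 ∧ w ∉ Lset C}
      = {w | w ∈ evenWords 24 ∧ hammingDist v w = 2} := by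
    ext w
    simp only [Set.mem_union, Set.mem_setOf_eq]
    tauto
  have hdisj : Disjoint {w | w ∈ evenWords 24 ∧ hammingDist v w = 2 ∧ w ∈ Lset C}
      {w | w ∈ evenWords 24 ∧ hammingDist v w = 2 ∧ w ∉ Lset C} := by
    rw [Set.disjoint_left]
    rintro w ⟨_, _, hw⟩ ⟨_, _, hw'⟩
    exact hw' hw
  have hsum := Set.ncard_union_eq hdisj (Set.toFinite _) (Set.toFinite _)
  rw [hunion, hall, hin] at hsum
  by_cases hvL : v ∈ Lset C
  · rw [if_pos hvL] at hsum ⊢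
    omega
  · rw [if_neg hvL] at hsum ⊢
    omega

end Counts

end PCol

open PCol in
/-- For `B` the set of all even-weight words of `F_2^8` and `C ⊆ B` an `(8,16,4)`-code of
even-weight words, the set `L = {(x, y, y+z) : x, y ∈ B, z ∈ C}` gives a perfect 2-coloring
of the even-weight component of `HH(24)` with parameters `((28, 248)(8, 268))`. -/
theorem L_perfect_coloring (C : Set (Word 8))
    (hCB : C ⊆ evenWords 8) (hC : IsCode 8 16 4 C) :
    IsPerfect2Coloring (evenWords 24)
      {w | ∃ x ∈ evenWords 8, ∃ y ∈ evenWords 8, ∃ z ∈ C, w = cat3 x y (y + z)}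
      28 248 8 268 := by
  show IsPerfect2Coloring (evenWords 24) (Lset C) 28 248 8 268
  have h0even : (0 : Word 8) ∈ evenWords 8 := (mem_evenWords_iff 0).mpr (by simp [σp])
  have h0σ : σp (0 : Word 8) = 0 := by simp [σp]
  have hLV : Lset C ⊆ evenWords 24 := by
    rintro w ⟨x, hx, y, hy, z, hz, rfl⟩
    rw [mem_evenWords_iff, σp_cat3, σp_add, (mem_evenWords_iff x).mp hx,
      (mem_evenWords_iff y).mp hy, σp_of_mem hCB hz]
    simp
  refine ⟨hLV, ?_, ?_, ?_, ?_⟩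
  · obtain ⟨z₀, hz₀⟩ := Set.nonempty_of_ncard_ne_zero
      (show C.ncard ≠ 0 by rw [hC.1]; omega)
    exact ⟨cat3 0 0 (0 + z₀), 0, h0even, 0, h0even, z₀, hz₀, rfl⟩
  · set u0 : Word 8 := ind ({0} : Finset (Fin 8)) with hu0
    have hn : hammingNorm u0 = 1 := by
      rw [hu0, norm_eq_supp, supp_ind]
      exact Finset.card_singleton _
    have hσ : σp u0 = 1 := by rw [← norm_cast_eq_σp, hn]; rfl
    refine ⟨cat3 u0 u0 0, ?_, ?_⟩
    · rw [mem_evenWords_iff, σp_cat3, hσ, h0σ]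
      decide
    · intro hmem
      obtain ⟨h1, _, _⟩ := (mem_Lset_iff C _).mp hmem
      rw [q1_cat3] at h1
      exact one_ne_zero (hσ ▸ h1)
  · intro v hv
    have hvV : v ∈ evenWords 24 := hLV hv
    constructor
    · have h := count_in hCB hC v hvV
      rw [if_pos hv] at h
      exact h
    · have h := count_out hCB hC v hvV
      rw [if_pos hv] at h
      exact h
  · rintro v ⟨hvV, hvL⟩
    constructor
    · have h := count_in hCB hC v hvV
      rw [if_neg hvL] at h
      exact h
    · have h := count_out hCB hC v hvV
      rw [if_neg hvL] at h
      exact h
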